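/- Let λ₁ > λ₂ = λ₃ > 0, set μᵢ = (λ₁+λ₂+λ₃)/2 − λᵢ, a = μ₂²+μ₃², b = μ₁²+μ₃², c = μ₁²+μ₂², and A = a x² + b y² + c z². Then for (x, y, z) ∈ ℝ³ with x² + y² + z² = 1, the following are equivalent: (i) there exists λ' ∈ ℝ with x·(a² − 2aA − λ') = 0, y·(b² − 2bA − λ') = 0, z·(c² − 2cA − λ') = 0, and there is NO ν ∈ ℝ with a x = ν x, b y = ν y, c z = ν z; (ii) x² = 1/2 and y² + z² = 1/2. (Paper's Theorem 3.1, case λ₁ > λ₂ = λ₃: the non-harmonic biharmonic unit sections among left-invariant unit vector fields on SU(2) are exactly the two circles x = ±1/√2, y² + z² = 1/2.) -/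
import Mathlib


/-- Theorem 3.1, case λ₁ > λ₂ = λ₃ > 0: the non-harmonic biharmonic unit sections
among left-invariant unit vector fields on SU(2) are exactly the two circles
x = ±1/√2, y² + z² = 1/2 (algebraic form). -/
theorem su2_case23_nonharmonic_biharmonic_sections
    (l₁ l₂ l₃ : ℝ) (h12 : l₁ > l₂) (h23 : l₂ = l₃) (h3 : 0 < l₃)
    (μ₁ μ₂ μ₃ : ℝ)
    (hμ₁ : μ₁ = (l₁ + l₂ + l₃) / 2 - l₁)
    (hμ₂ : μ₂ = (l₁ + l₂ + l₃) / 2 - l₂)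
    (hμ₃ : μ₃ = (l₁ + l₂ + l₃) / 2 - l₃)
    (a b c : ℝ)
    (ha : a = μ₂ ^ 2 + μ₃ ^ 2) (hb : b = μ₁ ^ 2 + μ₃ ^ 2) (hc : c = μ₁ ^ 2 + μ₂ ^ 2)
    (x y z : ℝ) (hxyz : x ^ 2 + y ^ 2 + z ^ 2 = 1)
    (A : ℝ) (hA : A = a * x ^ 2 + b * y ^ 2 + c * z ^ 2) :
    ((∃ l' : ℝ,
        x * (a ^ 2 - 2 * a * A - l') = 0 ∧
        y * (b ^ 2 - 2 * b * A - l') = 0 ∧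
        z * (c ^ 2 - 2 * c * A - l') = 0) ∧
      ¬ ∃ ν : ℝ, a * x = ν * x ∧ b * y = ν * y ∧ c * z = ν * z)
    ↔ (x ^ 2 = 1 / 2 ∧ y ^ 2 + z ^ 2 = 1 / 2) := by
  have hμ23 : μ₂ = μ₃ := by rw [hμ₂, hμ₃, h23]
  have hbc : b = c := by rw [hb, hc, hμ23]
  have hab : a - b = (l₁ - l₂) * l₃ := by
    rw [ha, hb, hμ₁, hμ₂, hμ₃]; ring
  have hba : b < a := by nlinarith [mul_pos (sub_pos.mpr h12) h3]
  have hne : a - b ≠ 0 := ne_of_gt (sub_pos.mpr hba)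
  have hAx : A = b + (a - b) * x ^ 2 := by
    linear_combination hA - z ^ 2 * hbc + b * hxyz
  constructor
  · rintro ⟨⟨l', hx, hy, hz⟩, hnh⟩
    have hxne : x ≠ 0 := by
      intro h
      exact hnh ⟨b, by rw [h]; ring, by ring, by rw [hbc]⟩
    have hyzne : y ≠ 0 ∨ z ≠ 0 := by
      by_contra h
      push_neg at h
      exact hnh ⟨a, rfl, by rw [h.1]; ring, by rw [h.2]; ring⟩
    have h1 : a ^ 2 - 2 * a * A - l' = 0 :=
      (mul_eq_zero.mp hx).resolve_left hxne
    have h2 : b ^ 2 - 2 * b * A - l' = 0 := by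
      rcases hyzne with hy' | hz'
      · exact (mul_eq_zero.mp hy).resolve_left hy'
      · rw [hbc]; exact (mul_eq_zero.mp hz).resolve_left hz'
    have hA2 : a + b - 2 * A = 0 := by
      have hfac : (a - b) * (a + b - 2 * A) = 0 := by linear_combination h1 - h2
      exact (mul_eq_zero.mp hfac).resolve_left hne
    have hx2 : x ^ 2 = 1 / 2 := by
      have hfac : (a - b) * (1 - 2 * x ^ 2) = 0 := by linear_combination hA2 + 2 * hAx
      have := (mul_eq_zero.mp hfac).resolve_left hne
      linarith
    exact ⟨hx2, by linarith⟩
  · rintro ⟨hx2, hyz2⟩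
    have hAeq : 2 * A = a + b := by rw [hAx, hx2]; ring
    constructor
    · refine ⟨a ^ 2 - 2 * a * A, by ring, ?_, ?_⟩
      · linear_combination (a - b) * y * hAeq
      · rw [← hbc]; linear_combination (a - b) * z * hAeq
    · rintro ⟨ν, e1, e2, e3⟩
      have hxne : x ≠ 0 := by
        intro h; rw [h] at hx2; norm_num at hx2
      have hav : a = ν := mul_right_cancel₀ hxne e1
      have hyzne : y ≠ 0 ∨ z ≠ 0 := by
        by_contra h
        push_neg at h
        rw [h.1, h.2] at hyz2; norm_num at hyz2
      have hbv : b = ν := by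
        rcases hyzne with hy' | hz'
        · exact mul_right_cancel₀ hy' e2
        · rw [hbc]; exact mul_right_cancel₀ hz' e3
      rw [hav, hbv] at hba
      exact lt_irrefl _ hba
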